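/- For every nonnegative integer n, $\sum_{m=0}^{\lfloor n/2\rfloor}\binom{n}{2m}E_{n-2m}(x)(-1)^m y^{2m}=\sum_{k=0}^{n}\sum_{l=0}^{k}\sum_{m=0}^{\lfloor l/2\rfloor}S_2(n,k)\lambda^{n+l-k-2m}\binom{k}{l}E_{k-l,\lambda}(x)(-1)^m y^{2m}S_1(l,2m)$. -/

import Mathlib

open PowerSeries Finset Complex

/-- The degenerate falling factorial `(x)_{n,λ} = x(x-λ)⋯(x-(n-1)λ)`. -/
noncomputable def dff (l x : ℂ) (n : ℕ) : ℂ := ∏ j ∈ Finset.range n, (x - j * l)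

/-- Exponential generating function of a sequence: `Σ f n * t^n / n!`. -/
noncomputable def egf (f : ℕ → ℂ) : PowerSeries ℂ := PowerSeries.mk fun n => f n / n.factorial

/-- The degenerate exponential `e_λ^x(t) = (1+λt)^{x/λ} = Σ (x)_{n,λ} t^n/n!` as a power series. -/
noncomputable def degExp (l x : ℂ) : PowerSeries ℂ := egf (dff l x)

/-- The degenerate cosine `cos_λ^{(y)}(t) = cos((y/λ) log(1+λt)) = (e_λ^{iy}(t)+e_λ^{-iy}(t))/2`. -/
noncomputable def degCos (l y : ℂ) : PowerSeries ℂ :=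
  PowerSeries.C (1/2 : ℂ) * (degExp l (Complex.I * y) + degExp l (-(Complex.I * y)))

/-- The degenerate sine `sin_λ^{(y)}(t) = sin((y/λ) log(1+λt)) = (e_λ^{iy}(t)-e_λ^{-iy}(t))/(2i)`. -/
noncomputable def degSin (l y : ℂ) : PowerSeries ℂ :=
  PowerSeries.C (1/(2*Complex.I)) * (degExp l (Complex.I * y) - degExp l (-(Complex.I * y)))

/-- The exponential series `e^{at} = Σ a^n t^n/n!`. -/
noncomputable def expS (a : ℂ) : PowerSeries ℂ := egf (fun n => a ^ n)

/-- The series of `log(1+t)`. -/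
noncomputable def logS : PowerSeries ℂ := PowerSeries.mk fun n => if n = 0 then 0 else (-1)^(n+1) / n

set_option linter.unusedSectionVars false



lemma coeff_pow_zero_of_lt {f : PowerSeries ℂ} (hf : PowerSeries.constantCoeff f = 0)
    {k j : ℕ} (h : k < j) : (PowerSeries.coeff k) (f ^ j) = 0 := by
  induction j generalizing k with
  | zero => omega
  | succ j ih =>
    rw [pow_succ, mul_comm, PowerSeries.coeff_mul]
    refine Finset.sum_eq_zero fun p hp => ?_
    rw [Finset.HasAntidiagonal.mem_antidiagonal] at hp
    rcases Nat.eq_zero_or_pos p.1 with h0 | h0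
    · rw [h0]
      simp [PowerSeries.coeff_zero_eq_constantCoeff, hf]
    · have : p.2 < j := by omega
      rw [ih this, mul_zero]

lemma deriv_logS : (1 + PowerSeries.X) * (d⁄dX ℂ logS) = 1 := by
  ext n
  rw [add_mul, one_mul, map_add, PowerSeries.coeff_one]
  cases n with
  | zero =>
    simp [PowerSeries.coeff_derivative, logS, PowerSeries.coeff_mk]
  | succ n =>
    rw [PowerSeries.coeff_succ_X_mul, PowerSeries.coeff_derivative, PowerSeries.coeff_derivative]
    simp only [logS, PowerSeries.coeff_mk, Nat.succ_ne_zero, if_false, Nat.add_eq_zero,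
      and_false]
    have h1 : ((n:ℂ) + 1) ≠ 0 := Nat.cast_add_one_ne_zero n
    have h2 : ((n:ℂ) + 1 + 1) ≠ 0 := by
      have : (((n+2:ℕ)):ℂ) ≠ 0 := Nat.cast_ne_zero.mpr (by omega)
      push_cast at this
      intro hc; apply this; linear_combination hc
    push_cast
    field_simp
    ring


lemma coeff_egf (f : ℕ → ℂ) (n : ℕ) : (PowerSeries.coeff n) (egf f) = f n / n.factorial := by
  simp [egf]

lemma factC_ne (n : ℕ) : ((n.factorial : ℂ)) ≠ 0 := Nat.cast_ne_zero.mpr n.factorial_ne_zero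

lemma egf_inj {f g : ℕ → ℂ} (h : egf f = egf g) : ∀ n, f n = g n := by
  intro n
  have := congrArg (PowerSeries.coeff n) h
  rw [coeff_egf, coeff_egf] at this
  have hf : ((n.factorial : ℂ)) ≠ 0 := factC_ne n
  field_simp at this
  exact this

/-- binomial convolution -/
noncomputable def bconv (f g : ℕ → ℂ) (n : ℕ) : ℂ :=
  ∑ j ∈ Finset.range (n+1), (n.choose j : ℂ) * f j * g (n-j)

lemma egf_mul (f g : ℕ → ℂ) : egf f * egf g = egf (bconv f g) := by
  ext n
  rw [PowerSeries.coeff_mul, coeff_egf, bconv, Finset.Nat.sum_antidiagonal_eq_sum_range_succ_mk,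
    Finset.sum_div]
  refine Finset.sum_congr rfl fun m hm => ?_
  rw [Finset.mem_range] at hm
  have hmn : m ≤ n := Nat.lt_succ_iff.mp hm
  rw [coeff_egf, coeff_egf, Nat.cast_choose ℂ hmn]
  have h1 := factC_ne m
  have h2 := factC_ne (n-m)
  have h3 := factC_ne n
  field_simp

section S1sec
variable (S1 : ℕ → ℕ → ℂ)
  (hS1 : ∀ j, logS ^ j = PowerSeries.C (Nat.factorial j : ℂ) * egf (fun k => S1 k j))

include hS1

lemma S1c (k j : ℕ) : (PowerSeries.coeff k) (logS ^ j)
    = (j.factorial : ℂ) * S1 k j / (k.factorial : ℂ) := by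
  rw [hS1, PowerSeries.coeff_C_mul, coeff_egf, mul_div_assoc]

lemma S1_vanish {k j : ℕ} (h : k < j) : S1 k j = 0 := by
  have h0 : PowerSeries.constantCoeff logS = 0 := by
    simp [logS, PowerSeries.constantCoeff_mk]
  have := coeff_pow_zero_of_lt h0 h
  rw [S1c S1 hS1] at this
  have := (div_eq_zero_iff.mp this).resolve_right (factC_ne k)
  exact (mul_eq_zero.mp this).resolve_left (factC_ne j)

lemma S1_zero (k : ℕ) : S1 k 0 = if k = 0 then 1 else 0 := by
  have := congrArg (PowerSeries.coeff k) (hS1 0)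
  rw [pow_zero, PowerSeries.coeff_one, PowerSeries.coeff_C_mul, coeff_egf] at this
  rcases Nat.eq_zero_or_pos k with rfl | hk
  · simpa using this.symm
  · rw [if_neg (by omega : ¬ k = 0)] at this
    rw [if_neg (by omega : ¬ k = 0)]
    simp only [Nat.factorial_zero, Nat.cast_one, one_mul] at this
    have := this.symm
    exact (div_eq_zero_iff.mp this).resolve_right (factC_ne k)

lemma S1_key (j : ℕ) : (1 + PowerSeries.X) * (d⁄dX ℂ (logS ^ (j+1)))
    = PowerSeries.C ((j:ℂ)+1) * logS ^ j := by
  have hD := Derivation.leibniz_pow (D := d⁄dX ℂ) (a := logS) (j+1)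
  simp only [Nat.add_sub_cancel, nsmul_eq_mul, smul_eq_mul] at hD
  rw [hD]
  have hc : ((j+1 : ℕ) : ℂ⟦X⟧) = PowerSeries.C ((j:ℂ)+1) := by
    rw [← map_natCast (PowerSeries.C (R := ℂ)) (j+1)]
    push_cast; rfl
  rw [hc]
  have := deriv_logS
  linear_combination (PowerSeries.C ((j:ℂ)+1) * logS ^ j) * this

lemma S1_rec (k j : ℕ) : S1 (k+1) (j+1) = S1 k j - (k:ℂ) * S1 k (j+1) := by
  have key := congrArg (PowerSeries.coeff k) (S1_key S1 hS1 j)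
  rw [add_mul, one_mul, map_add, PowerSeries.coeff_C_mul] at key
  rw [PowerSeries.coeff_derivative, S1c S1 hS1] at key
  cases k with
  | zero =>
    rw [PowerSeries.coeff_zero_X_mul] at key
    simp only [S1c S1 hS1] at key
    have hj := factC_ne j
    have e2 : ((j+1).factorial : ℂ) = ((j:ℂ)+1) * ((j).factorial : ℂ) := by
      rw [Nat.factorial_succ]; push_cast; ring
    rw [e2] at key
    have hj1 : ((j:ℂ)+1) ≠ 0 := Nat.cast_add_one_ne_zero j
    simp only [Nat.factorial_zero, Nat.factorial_one, Nat.cast_one, div_one, Nat.cast_zero] at key ⊢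
    field_simp at key
    have hc : ((j:ℂ)+1) * (j.factorial:ℂ) ≠ 0 := mul_ne_zero hj1 hj
    push_cast
    apply mul_left_cancel₀ hc
    linear_combination key
  | succ k =>
    rw [PowerSeries.coeff_succ_X_mul, PowerSeries.coeff_derivative] at key
    simp only [S1c S1 hS1] at key
    have h1 := factC_ne (k+1)
    have h2 := factC_ne (k+2)
    have h3 := factC_ne j
    have e1 : ((k+2).factorial : ℂ) = ((k:ℂ)+2) * ((k+1).factorial : ℂ) := by
      rw [Nat.factorial_succ]; push_cast; ring
    have e2 : ((j+1).factorial : ℂ) = ((j:ℂ)+1) * ((j).factorial : ℂ) := by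
      rw [Nat.factorial_succ]; push_cast; ring
    rw [e1, e2] at key
    have hk2 : ((k:ℂ)+2) ≠ 0 := by
      have : (((k+2:ℕ)):ℂ) ≠ 0 := Nat.cast_ne_zero.mpr (by omega)
      push_cast at this; intro hc; apply this; linear_combination hc
    have hj1 : ((j:ℂ)+1) ≠ 0 := Nat.cast_add_one_ne_zero j
    push_cast at key
    field_simp at key
    have hc : ((j:ℂ)+1) * (j.factorial:ℂ) * (((k:ℂ)+2) * (((k+1).factorial:ℂ))^2) ≠ 0 :=
      mul_ne_zero (mul_ne_zero hj1 h3) (mul_ne_zero hk2 (pow_ne_zero 2 h1))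
    push_cast
    apply mul_left_cancel₀ hc
    linear_combination ((j:ℂ)+1) * (j.factorial:ℂ) * (((k+1).factorial:ℂ))^2 * key
end S1sec
section S2sec
variable (S2 : ℕ → ℕ → ℂ)
  (hS2 : ∀ k, (expS 1 - 1) ^ k = PowerSeries.C (Nat.factorial k : ℂ) * egf (fun n => S2 n k))

lemma deriv_expS1 : d⁄dX ℂ (expS 1) = expS 1 := by
  ext n
  rw [PowerSeries.coeff_derivative]
  simp only [expS, coeff_egf, one_pow]
  have e1 : ((n+1).factorial : ℂ) = ((n:ℂ)+1) * ((n).factorial : ℂ) := by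
    rw [Nat.factorial_succ]; push_cast; ring
  rw [e1]
  have h1 := factC_ne n
  have hn1 : ((n:ℂ)+1) ≠ 0 := Nat.cast_add_one_ne_zero n
  field_simp

include hS2

lemma S2c (n k : ℕ) : (PowerSeries.coeff n) ((expS 1 - 1) ^ k)
    = (k.factorial : ℂ) * S2 n k / (n.factorial : ℂ) := by
  rw [hS2, PowerSeries.coeff_C_mul, coeff_egf, mul_div_assoc]

lemma S2_vanish {n k : ℕ} (h : n < k) : S2 n k = 0 := by
  have h0 : PowerSeries.constantCoeff (expS 1 - 1) = 0 := by
    simp [expS, egf, PowerSeries.constantCoeff_mk]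
  have := coeff_pow_zero_of_lt h0 h
  rw [S2c S2 hS2] at this
  have := (div_eq_zero_iff.mp this).resolve_right (factC_ne n)
  exact (mul_eq_zero.mp this).resolve_left (factC_ne k)

lemma S2_zero (n : ℕ) : S2 n 0 = if n = 0 then 1 else 0 := by
  have := congrArg (PowerSeries.coeff n) (hS2 0)
  rw [pow_zero, PowerSeries.coeff_one, PowerSeries.coeff_C_mul, coeff_egf] at this
  rcases Nat.eq_zero_or_pos n with rfl | hn
  · simpa using this.symm
  · rw [if_neg (by omega : ¬ n = 0)] at this
    rw [if_neg (by omega : ¬ n = 0)]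
    simp only [Nat.factorial_zero, Nat.cast_one, one_mul] at this
    have := this.symm
    exact (div_eq_zero_iff.mp this).resolve_right (factC_ne n)

omit hS2 in
lemma S2_key (k : ℕ) : d⁄dX ℂ ((expS 1 - 1) ^ (k+1))
    = PowerSeries.C ((k:ℂ)+1) * ((expS 1 - 1) ^ (k+1) + (expS 1 - 1) ^ k) := by
  have hD := Derivation.leibniz_pow (D := d⁄dX ℂ) (a := expS 1 - 1) (k+1)
  simp only [Nat.add_sub_cancel, nsmul_eq_mul, smul_eq_mul] at hD
  rw [hD]
  have hd : d⁄dX ℂ (expS 1 - 1) = expS 1 := by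
    ext m
    rw [PowerSeries.coeff_derivative, map_sub]
    have := congrArg (PowerSeries.coeff m) deriv_expS1
    rw [PowerSeries.coeff_derivative] at this
    rw [PowerSeries.coeff_one, if_neg (Nat.succ_ne_zero m), sub_zero, this]
  rw [hd]
  have hc : ((k+1 : ℕ) : ℂ⟦X⟧) = PowerSeries.C ((k:ℂ)+1) := by
    rw [← map_natCast (PowerSeries.C (R := ℂ)) (k+1)]
    push_cast; rfl
  rw [hc]
  ring

lemma S2_rec (n k : ℕ) : S2 (n+1) (k+1) = ((k:ℂ)+1) * S2 n (k+1) + S2 n k := by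
  have key := congrArg (PowerSeries.coeff n) (S2_key k)
  rw [PowerSeries.coeff_derivative, PowerSeries.coeff_C_mul, map_add] at key
  simp only [S2c S2 hS2] at key
  have h1 := factC_ne n
  have h2 := factC_ne (n+1)
  have h3 := factC_ne k
  have e1 : ((n+1).factorial : ℂ) = ((n:ℂ)+1) * ((n).factorial : ℂ) := by
    rw [Nat.factorial_succ]; push_cast; ring
  have e2 : ((k+1).factorial : ℂ) = ((k:ℂ)+1) * ((k).factorial : ℂ) := by
    rw [Nat.factorial_succ]; push_cast; ring
  rw [e1, e2] at key
  have hn1 : ((n:ℂ)+1) ≠ 0 := Nat.cast_add_one_ne_zero n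
  have hk1 : ((k:ℂ)+1) ≠ 0 := Nat.cast_add_one_ne_zero k
  field_simp at key
  have hc : ((k:ℂ)+1) * (k.factorial:ℂ) * (((n:ℂ)+1) * (n.factorial:ℂ)) ≠ 0 :=
    mul_ne_zero (mul_ne_zero hk1 h3) (mul_ne_zero hn1 h1)
  push_cast
  apply mul_left_cancel₀ hc
  linear_combination ((k:ℂ)+1) * (k.factorial:ℂ) * (((n:ℂ)+1) * (n.factorial:ℂ)) * key
end S2sec
section Orth
variable (S1 S2 : ℕ → ℕ → ℂ)
  (hS1 : ∀ j, logS ^ j = PowerSeries.C (Nat.factorial j : ℂ) * egf (fun k => S1 k j))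
  (hS2 : ∀ k, (expS 1 - 1) ^ k = PowerSeries.C (Nat.factorial k : ℂ) * egf (fun n => S2 n k))

include hS1 hS2

lemma orth (n j : ℕ) :
    ∑ k ∈ Finset.range (n+1), S2 n k * S1 k j = if n = j then 1 else 0 := by
  induction n generalizing j with
  | zero =>
    rw [Finset.sum_range_one, S2_zero S2 hS2, if_pos rfl, one_mul]
    rcases Nat.eq_zero_or_pos j with rfl | hj
    · simp [S1_zero S1 hS1]
    · rw [S1_vanish S1 hS1 hj, if_neg (by omega)]
  | succ n ih =>
    rw [Finset.sum_range_succ']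
    rw [S2_zero S2 hS2, if_neg (Nat.succ_ne_zero n), zero_mul, add_zero]
    have step : ∀ k ∈ Finset.range (n+1),
        S2 (n+1) (k+1) * S1 (k+1) j
          = ((k:ℂ)+1) * S2 n (k+1) * S1 (k+1) j + S2 n k * S1 (k+1) j := by
      intro k _
      rw [S2_rec S2 hS2]
      ring
    rw [Finset.sum_congr rfl step, Finset.sum_add_distrib]
    have hA : ∑ k ∈ Finset.range (n+1), ((k:ℂ)+1) * S2 n (k+1) * S1 (k+1) j
        = ∑ k ∈ Finset.range (n+1), (k:ℂ) * S2 n k * S1 k j := by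
      have h1 : ∑ k ∈ Finset.range (n+2), (k:ℂ) * S2 n k * S1 k j
          = ∑ k ∈ Finset.range (n+1), ((k:ℂ)+1) * S2 n (k+1) * S1 (k+1) j + 0 := by
        rw [Finset.sum_range_succ']
        push_cast
        simp
      have h2 : ∑ k ∈ Finset.range (n+2), (k:ℂ) * S2 n k * S1 k j
          = ∑ k ∈ Finset.range (n+1), (k:ℂ) * S2 n k * S1 k j := by
        rw [Finset.sum_range_succ, S2_vanish S2 hS2 (Nat.lt_succ_self n)]
        ring
      rw [← h2, h1, add_zero]
    rw [hA, ← Finset.sum_add_distrib]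
    have merge : ∀ k ∈ Finset.range (n+1),
        (k:ℂ) * S2 n k * S1 k j + S2 n k * S1 (k+1) j
          = S2 n k * ((k:ℂ) * S1 k j + S1 (k+1) j) := by
      intro k _; ring
    rw [Finset.sum_congr rfl merge]
    cases j with
    | zero =>
      rw [if_neg (Nat.succ_ne_zero n)]
      refine Finset.sum_eq_zero fun k _ => ?_
      rw [S1_zero S1 hS1]
      rcases Nat.eq_zero_or_pos k with rfl | hk
      · simp [S1_zero S1 hS1]
      · rw [if_neg (by omega), S1_zero S1 hS1, if_neg (by omega)]
        ring
    | succ j =>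
      have inner : ∀ k ∈ Finset.range (n+1),
          S2 n k * ((k:ℂ) * S1 k (j+1) + S1 (k+1) (j+1)) = S2 n k * S1 k j := by
        intro k _
        rw [S1_rec S1 hS1]
        ring
      rw [Finset.sum_congr rfl inner, ih j]
      simp [Nat.succ_inj]
end Orth

section Vdm
variable (S2 : ℕ → ℕ → ℂ)
  (hS2 : ∀ k, (expS 1 - 1) ^ k = PowerSeries.C (Nat.factorial k : ℂ) * egf (fun n => S2 n k))
include hS2

lemma vdm (a b n : ℕ) :
    ∑ m ∈ Finset.range (n+1), (n.choose m : ℂ) * S2 m a * S2 (n-m) b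
      = ((a+b).choose a : ℂ) * S2 n (a+b) := by
  have key := congrArg (PowerSeries.coeff n) (pow_add (expS 1 - 1) a b)
  rw [PowerSeries.coeff_mul, Finset.Nat.sum_antidiagonal_eq_sum_range_succ_mk] at key
  simp only [S2c S2 hS2] at key
  have hn := factC_ne n
  have ha := factC_ne a
  have hb := factC_ne b
  -- key : (a+b)! * S2 n (a+b) / n! = Σ_m (a! S2 m a / m!) * (b! S2 (n-m) b / (n-m)!)
  have target : ∀ m ∈ Finset.range (n+1),
      (n.choose m : ℂ) * S2 m a * S2 (n-m) b
        = ((n.factorial : ℂ) / ((a.factorial : ℂ) * (b.factorial : ℂ))) *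
            (((a.factorial:ℂ) * S2 m a / (m.factorial:ℂ)) *
              ((b.factorial:ℂ) * S2 (n-m) b / (((n-m).factorial:ℂ)))) := by
    intro m hm
    rw [Finset.mem_range] at hm
    have hmn : m ≤ n := Nat.lt_succ_iff.mp hm
    rw [Nat.cast_choose ℂ hmn]
    have h1 := factC_ne m
    have h2 := factC_ne (n-m)
    field_simp
  rw [Finset.sum_congr rfl target, ← Finset.mul_sum, ← key]
  rw [Nat.cast_choose ℂ (Nat.le_add_right a b)]
  have h4 := factC_ne (a+b)
  have e : (a + b) - a = b := by omega
  rw [e]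
  field_simp
end Vdm

section F1
variable (lam : ℂ) (S1 : ℕ → ℕ → ℂ)
  (hS1 : ∀ j, logS ^ j = PowerSeries.C (Nat.factorial j : ℂ) * egf (fun k => S1 k j))
include hS1

lemma S1_mul_zero (l : ℕ) : (l:ℂ) * S1 l 0 = 0 := by
  rcases Nat.eq_zero_or_pos l with rfl | hl
  · simp
  · rw [S1_zero S1 hS1, if_neg (by omega)]; ring

lemma dff_eq (a : ℂ) (l : ℕ) :
    dff lam a l = ∑ j ∈ Finset.range (l+1), S1 l j * lam^(l-j) * a^j := by
  induction l with
  | zero => simp [dff, S1_zero S1 hS1]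
  | succ l ih =>
    have hstep : dff lam a (l+1) = dff lam a l * (a - (l:ℂ) * lam) := by
      rw [dff, dff, Finset.prod_range_succ]
    rw [hstep, ih]
    rw [Finset.sum_range_succ' (fun j => S1 (l+1) j * lam^(l+1-j) * a^j) (l+1)]
    rw [S1_zero S1 hS1, if_neg (Nat.succ_ne_zero l)]
    simp only [Nat.succ_sub_succ, zero_mul, pow_zero, mul_one, add_zero]
    have hrec : ∀ j ∈ Finset.range (l+1),
        S1 (l+1) (j+1) * lam^(l-j) * a^(j+1)
          = S1 l j * lam^(l-j) * a^(j+1) - (l:ℂ) * (S1 l (j+1) * lam^(l-j) * a^(j+1)) := by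
      intro j _
      rw [S1_rec S1 hS1]
      ring
    rw [Finset.sum_congr rfl hrec, Finset.sum_sub_distrib, ← Finset.mul_sum]
    have hB : ∑ j ∈ Finset.range (l+1), S1 l (j+1) * lam^(l-j) * a^(j+1)
        = lam * (∑ j ∈ Finset.range (l+1), S1 l j * lam^(l-j) * a^j)
            - S1 l 0 * lam^(l+1) := by
      have hBtop : ∑ j ∈ Finset.range (l+1), S1 l (j+1) * lam^(l-j) * a^(j+1)
          = ∑ j ∈ Finset.range l, S1 l (j+1) * lam^(l-j) * a^(j+1) := by
        rw [Finset.sum_range_succ, S1_vanish S1 hS1 (Nat.lt_succ_self l)]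
        ring
      have hH : lam * (∑ j ∈ Finset.range (l+1), S1 l j * lam^(l-j) * a^j)
          = ∑ j ∈ Finset.range (l+1), S1 l j * lam^((l-j)+1) * a^j := by
        rw [Finset.mul_sum]
        refine Finset.sum_congr rfl fun j _ => ?_
        rw [pow_succ]
        ring
      rw [hH, Finset.sum_range_succ' (fun j => S1 l j * lam^((l-j)+1) * a^j) l]
      have : ∀ j ∈ Finset.range l,
          S1 l (j+1) * lam^((l-(j+1))+1) * a^(j+1)
            = S1 l (j+1) * lam^(l-j) * a^(j+1) := by
        intro j hj
        rw [Finset.mem_range] at hj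
        rw [show l-(j+1)+1 = l-j from by omega]
      rw [Finset.sum_congr rfl this, hBtop]
      simp only [Nat.sub_zero, pow_zero, mul_one]
      ring
    rw [hB]
    have hA : ∑ j ∈ Finset.range (l+1), S1 l j * lam^(l-j) * a^(j+1)
        = a * ∑ j ∈ Finset.range (l+1), S1 l j * lam^(l-j) * a^j := by
      rw [Finset.mul_sum]
      refine Finset.sum_congr rfl fun j _ => ?_
      ring
    rw [hA]
    have hz := S1_mul_zero S1 hS1 l
    linear_combination (-(lam^(l+1)) : ℂ) * hz
end F1

section F2
variable (lam : ℂ) (S1 S2 : ℕ → ℕ → ℂ)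
  (hS1 : ∀ j, logS ^ j = PowerSeries.C (Nat.factorial j : ℂ) * egf (fun k => S1 k j))
  (hS2 : ∀ k, (expS 1 - 1) ^ k = PowerSeries.C (Nat.factorial k : ℂ) * egf (fun n => S2 n k))
include hS1 hS2

lemma Tdff (a : ℂ) (n : ℕ) :
    ∑ k ∈ Finset.range (n+1), S2 n k * lam^(n-k) * dff lam a k = a^n := by
  have inner : ∀ k ∈ Finset.range (n+1),
      S2 n k * lam^(n-k) * dff lam a k
        = ∑ j ∈ Finset.range (n+1), S2 n k * S1 k j * (lam^(n-j) * a^j) := by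
    intro k hk
    rw [Finset.mem_range] at hk
    have hk' : k ≤ n := Nat.lt_succ_iff.mp hk
    rw [dff_eq lam S1 hS1, Finset.mul_sum]
    have hsub : Finset.range (k+1) ⊆ Finset.range (n+1) := Finset.range_subset_range.mpr (by omega)
    have hzero : ∀ j ∈ Finset.range (n+1), j ∉ Finset.range (k+1) →
        S2 n k * lam^(n-k) * (S1 k j * lam^(k-j) * a^j) = 0 := by
      intro j _ hj
      rw [Finset.mem_range, not_lt] at hj
      rw [S1_vanish S1 hS1 (by omega : k < j)]
      ring
    rw [Finset.sum_subset hsub hzero]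
    refine Finset.sum_congr rfl fun j hj => ?_
    rcases Nat.lt_or_ge k j with hcase | hcase
    · rw [S1_vanish S1 hS1 hcase]
      ring
    · have : lam^(n-k) * lam^(k-j) = lam^(n-j) := by
        rw [← pow_add]
        congr 1
        omega
      calc S2 n k * lam^(n-k) * (S1 k j * lam^(k-j) * a^j)
          = S2 n k * S1 k j * (lam^(n-k) * lam^(k-j) * a^j) := by ring
        _ = S2 n k * S1 k j * (lam^(n-j) * a^j) := by rw [this]
  rw [Finset.sum_congr rfl inner, Finset.sum_comm]
  have outer : ∀ j ∈ Finset.range (n+1),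
      ∑ k ∈ Finset.range (n+1), S2 n k * S1 k j * (lam^(n-j) * a^j)
        = (if n = j then 1 else 0) * (lam^(n-j) * a^j) := by
    intro j _
    rw [← Finset.sum_mul, orth S1 S2 hS1 hS2]
  rw [Finset.sum_congr rfl outer]
  rw [Finset.sum_eq_single n]
  · simp
  · intro j _ hj
    rw [if_neg (fun h => hj h.symm)]
    ring
  · intro h
    exact absurd (Finset.self_mem_range_succ n) h
end F2
lemma tri (F : ℕ → ℕ → ℂ) (N : ℕ) :
    ∑ k ∈ Finset.range N, ∑ j ∈ Finset.range (k+1), F j (k-j)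
      = ∑ a ∈ Finset.range N, ∑ b ∈ Finset.range (N-a), F a b := by
  induction N with
  | zero => simp
  | succ N ih =>
    rw [Finset.sum_range_succ, ih]
    have hsplit : ∀ a ∈ Finset.range N,
        ∑ b ∈ Finset.range (N+1-a), F a b
          = ∑ b ∈ Finset.range (N-a), F a b + F a (N-a) := by
      intro a ha
      rw [Finset.mem_range] at ha
      rw [show N+1-a = (N-a)+1 from by omega, Finset.sum_range_succ]
    rw [Finset.sum_range_succ (fun a => ∑ b ∈ Finset.range (N+1-a), F a b) N]
    rw [Finset.sum_congr rfl hsplit, Finset.sum_add_distrib]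
    rw [show N+1-N = 1 from by omega, Finset.sum_range_one]
    rw [Finset.sum_range_succ (fun j => F j (N-j)) N, Nat.sub_self]
    ring

lemma sum_even (f : ℕ → ℂ) (h : ∀ j, Odd j → f j = 0) (N : ℕ) :
    ∑ j ∈ Finset.range (N+1), f j = ∑ m ∈ Finset.range (N/2+1), f (2*m) := by
  induction N with
  | zero => simp
  | succ N ih =>
    rw [Finset.sum_range_succ, ih]
    rcases Nat.even_or_odd (N+1) with he | ho
    · obtain ⟨t, ht⟩ := he
      have h1 : (N+1)/2 = N/2 + 1 := by omega
      have h2 : 2*(N/2+1) = N+1 := by omega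
      rw [h1, Finset.sum_range_succ (fun m => f (2*m)) (N/2+1), h2]
    · have ht := ho
      obtain ⟨t, ht⟩ := ht
      rw [h _ ho, show (N+1)/2 = N/2 from by omega, add_zero]

lemma bconv_cancel (f g h : ℕ → ℂ) (h0 : h 0 ≠ 0)
    (heq : ∀ n, bconv f h n = bconv g h n) : ∀ n, f n = g n := by
  intro n
  induction n using Nat.strong_induction_on with
  | _ n ih =>
    have hn := heq n
    rw [bconv, bconv, Finset.sum_range_succ, Finset.sum_range_succ] at hn
    have hsum : ∑ j ∈ Finset.range n, (n.choose j : ℂ) * f j * h (n-j)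
        = ∑ j ∈ Finset.range n, (n.choose j : ℂ) * g j * h (n-j) := by
      refine Finset.sum_congr rfl fun j hj => ?_
      rw [Finset.mem_range] at hj
      rw [ih j hj]
    rw [hsum] at hn
    have : f n * h 0 = g n * h 0 := by
      have := add_left_cancel hn
      simpa [Nat.sub_self] using this
    exact mul_right_cancel₀ h0 this

noncomputable def Tr (lam : ℂ) (S2 : ℕ → ℕ → ℂ) (f : ℕ → ℂ) (n : ℕ) : ℂ :=
  ∑ k ∈ Finset.range (n+1), S2 n k * lam^(n-k) * f k

section Tmul
variable (lam : ℂ) (S2 : ℕ → ℕ → ℂ)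
  (hS2 : ∀ k, (expS 1 - 1) ^ k = PowerSeries.C (Nat.factorial k : ℂ) * egf (fun n => S2 n k))
include hS2

lemma Tmul (f g : ℕ → ℂ) (n : ℕ) :
    Tr lam S2 (bconv f g) n = bconv (Tr lam S2 f) (Tr lam S2 g) n := by
  have hRHS : bconv (Tr lam S2 f) (Tr lam S2 g) n
      = ∑ a ∈ Finset.range (n+1), ∑ b ∈ Finset.range (n+1),
          ((a+b).choose a : ℂ) * S2 n (a+b) * lam^(n-(a+b)) * f a * g b := by
    rw [bconv]
    have step1 : ∀ m ∈ Finset.range (n+1),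
        (n.choose m : ℂ) * Tr lam S2 f m * Tr lam S2 g (n-m)
          = ∑ a ∈ Finset.range (n+1), ∑ b ∈ Finset.range (n+1),
              (n.choose m : ℂ) * ((S2 m a * lam^(m-a) * f a) *
                (S2 (n-m) b * lam^((n-m)-b) * g b)) := by
      intro m hm
      rw [Finset.mem_range] at hm
      have hf : Tr lam S2 f m = ∑ a ∈ Finset.range (n+1), S2 m a * lam^(m-a) * f a := by
        rw [Tr]
        refine Finset.sum_subset (Finset.range_subset_range.mpr (by omega)) ?_
        intro a _ ha
        rw [Finset.mem_range, not_lt] at ha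
        rw [S2_vanish S2 hS2 (by omega : m < a)]
        ring
      have hg : Tr lam S2 g (n-m)
          = ∑ b ∈ Finset.range (n+1), S2 (n-m) b * lam^((n-m)-b) * g b := by
        rw [Tr]
        refine Finset.sum_subset (Finset.range_subset_range.mpr (by omega)) ?_
        intro b _ hb
        rw [Finset.mem_range, not_lt] at hb
        rw [S2_vanish S2 hS2 (by omega : n-m < b)]
        ring
      rw [hf, hg, mul_assoc, Finset.sum_mul_sum, Finset.mul_sum]
      refine Finset.sum_congr rfl fun a _ => ?_
      rw [Finset.mul_sum]
    rw [Finset.sum_congr rfl step1, Finset.sum_comm]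
    refine Finset.sum_congr rfl fun a ha => ?_
    rw [Finset.sum_comm]
    refine Finset.sum_congr rfl fun b hb => ?_
    rw [Finset.mem_range] at ha hb
    have hterm : ∀ m ∈ Finset.range (n+1),
        (n.choose m : ℂ) * ((S2 m a * lam^(m-a) * f a) * (S2 (n-m) b * lam^((n-m)-b) * g b))
          = ((n.choose m : ℂ) * S2 m a * S2 (n-m) b) * (lam^(n-a-b) * f a * g b) := by
      intro m hm
      rw [Finset.mem_range] at hm
      by_cases hca : a ≤ m
      · by_cases hcb : b ≤ n - m
        · have hl : lam^(m-a) * lam^((n-m)-b) = lam^(n-a-b) := by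
            rw [← pow_add]
            congr 1
            omega
          calc (n.choose m : ℂ) * ((S2 m a * lam^(m-a) * f a) * (S2 (n-m) b * lam^((n-m)-b) * g b))
              = ((n.choose m : ℂ) * S2 m a * S2 (n-m) b) * ((lam^(m-a) * lam^((n-m)-b)) * f a * g b) := by
                ring
            _ = ((n.choose m : ℂ) * S2 m a * S2 (n-m) b) * (lam^(n-a-b) * f a * g b) := by
                rw [hl]
        · rw [S2_vanish S2 hS2 (by omega : n-m < b)]
          ring
      · rw [S2_vanish S2 hS2 (by omega : m < a)]
        ring
    rw [Finset.sum_congr rfl hterm, ← Finset.sum_mul, vdm S2 hS2 a b n, Nat.sub_sub]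
    ring
  rw [hRHS, Tr]
  have hk : ∀ k ∈ Finset.range (n+1),
      S2 n k * lam^(n-k) * bconv f g k
        = ∑ j ∈ Finset.range (k+1),
            (((j+(k-j)).choose j : ℂ) * S2 n (j+(k-j)) * lam^(n-(j+(k-j))) * f j * g (k-j)) := by
    intro k _
    rw [bconv, Finset.mul_sum]
    refine Finset.sum_congr rfl fun j hj => ?_
    rw [Finset.mem_range] at hj
    rw [show j+(k-j) = k from by omega]
    ring
  rw [Finset.sum_congr rfl hk]
  rw [tri (fun a b => ((a+b).choose a : ℂ) * S2 n (a+b) * lam^(n-(a+b)) * f a * g b) (n+1)]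
  refine Finset.sum_congr rfl fun a ha => ?_
  rw [Finset.mem_range] at ha
  refine Finset.sum_subset (Finset.range_subset_range.mpr (by omega)) ?_
  intro b _ hb
  rw [Finset.mem_range, not_lt] at hb
  rw [S2_vanish S2 hS2 (by omega : n < a+b)]
  ring
end Tmul
lemma egf_add (f g : ℕ → ℂ) : egf f + egf g = egf (fun n => f n + g n) := by
  ext n
  simp [coeff_egf, add_div]


lemma two_mul_egf (f : ℕ → ℂ) : 2 * egf f = egf (fun n => 2 * f n) := by
  ext n
  rw [two_mul, map_add, coeff_egf, coeff_egf]
  ring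

lemma Iy_pow_even (y : ℝ) (m : ℕ) :
    (Complex.I*(y:ℂ))^(2*m) = (-1)^m * (y:ℂ)^(2*m) := by
  rw [pow_mul]
  have h2 : (Complex.I*(y:ℂ))^2 = -((y:ℂ)^2) := by
    rw [mul_pow, Complex.I_sq]; ring
  rw [h2, neg_pow, ← pow_mul]

theorem stmt17 (lam x y : ℝ) (E Ed : ℕ → ℂ) (S1 S2 : ℕ → ℕ → ℂ)
    (hE : egf E * (expS (1/2) + expS (-(1/2))) = 2 * expS x)
    (hEd : egf Ed * (degExp lam (1/2) + degExp lam (-(1/2))) = 2 * degExp lam x)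
    (hS1 : ∀ j, logS ^ j = PowerSeries.C (Nat.factorial j : ℂ) * egf (fun k => S1 k j))
    (hS2 : ∀ k, (expS 1 - 1) ^ k = PowerSeries.C (Nat.factorial k : ℂ) * egf (fun n => S2 n k))
    (n : ℕ) :
    ∑ m ∈ Finset.range (n/2+1), (n.choose (2*m) : ℂ) * E (n-2*m) * (-1)^m * (y:ℂ)^(2*m) =
      ∑ k ∈ Finset.range (n+1), ∑ l ∈ Finset.range (k+1), ∑ m ∈ Finset.range (l/2+1),
        S2 n k * (lam:ℂ)^(n+l-k-2*m) * (k.choose l : ℂ) * Ed (k-l) * (-1)^m * (y:ℂ)^(2*m) *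
          S1 l (2*m) := by
  set L : ℂ := (lam : ℂ) with hL
  set h₀ : ℕ → ℂ := fun q => (1/2:ℂ)^q + (-(1/2):ℂ)^q with hh₀
  set hd : ℕ → ℂ := fun q => dff L (1/2) q + dff L (-(1/2)) q with hhd
  set c' : ℕ → ℂ := fun q => (Complex.I*(y:ℂ))^q + (-(Complex.I*(y:ℂ)))^q with hc'
  set d : ℕ → ℂ := fun l => ∑ m ∈ Finset.range (l/2+1),
      (-1:ℂ)^m * (y:ℂ)^(2*m) * L^(l-2*m) * S1 l (2*m) with hd'
  -- scalar form of hE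
  have hEs : ∀ q, bconv E h₀ q = 2 * (x:ℂ)^q := by
    have e1 : expS (1/2) + expS (-(1/2)) = egf h₀ := by
      rw [expS, expS, egf_add]
    have e2 : (2 : PowerSeries ℂ) * expS x = egf (fun q => 2 * (x:ℂ)^q) := by
      rw [expS, two_mul_egf]
    rw [e1, e2, egf_mul] at hE
    exact egf_inj hE
  -- scalar form of hEd
  have hEds : ∀ q, bconv Ed hd q = 2 * dff L x q := by
    have e1 : degExp L (1/2) + degExp L (-(1/2)) = egf hd := by
      rw [degExp, degExp, egf_add]
    have e2 : (2 : PowerSeries ℂ) * degExp L x = egf (fun q => 2 * dff L x q) := by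
      rw [degExp, two_mul_egf]
    rw [e1, e2, egf_mul] at hEd
    exact egf_inj hEd
  -- Tr of hd is h₀
  have hTrhd : ∀ q, Tr L S2 hd q = h₀ q := by
    intro q
    rw [Tr]
    have : ∀ k ∈ Finset.range (q+1),
        S2 q k * L^(q-k) * hd k
          = S2 q k * L^(q-k) * dff L (1/2) k + S2 q k * L^(q-k) * dff L (-(1/2)) k := by
      intro k _
      simp only [hhd]
      ring
    rw [Finset.sum_congr rfl this, Finset.sum_add_distrib,
      Tdff L S1 S2 hS1 hS2 (1/2) q, Tdff L S1 S2 hS1 hS2 (-(1/2)) q]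
  -- Tr Ed = E
  have hTrEd : ∀ q, Tr L S2 Ed q = E q := by
    refine bconv_cancel _ _ h₀ (by norm_num [hh₀]) ?_
    intro q
    have step1 : bconv (Tr L S2 Ed) h₀ q = bconv (Tr L S2 Ed) (Tr L S2 hd) q := by
      rw [bconv, bconv]
      refine Finset.sum_congr rfl fun j _ => ?_
      rw [hTrhd]
    have step2 : bconv (Tr L S2 Ed) (Tr L S2 hd) q = Tr L S2 (bconv Ed hd) q :=
      (Tmul L S2 hS2 Ed hd q).symm
    have step3 : Tr L S2 (bconv Ed hd) q = 2 * (x:ℂ)^q := by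
      rw [Tr]
      have : ∀ k ∈ Finset.range (q+1),
          S2 q k * L^(q-k) * bconv Ed hd k
            = 2 * (S2 q k * L^(q-k) * dff L x k) := by
        intro k _
        rw [hEds k]
        ring
      rw [Finset.sum_congr rfl this, ← Finset.mul_sum, Tdff L S1 S2 hS1 hS2 x q]
    rw [step1, step2, step3, hEs]
  -- 2 * d = dff(Iy) + dff(-Iy)
  have hdd : ∀ l, 2 * d l = dff L (Complex.I*(y:ℂ)) l + dff L (-(Complex.I*(y:ℂ))) l := by
    intro l
    rw [dff_eq L S1 hS1, dff_eq L S1 hS1, ← Finset.sum_add_distrib]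
    have merge : ∀ j ∈ Finset.range (l+1),
        S1 l j * L^(l-j) * (Complex.I*(y:ℂ))^j + S1 l j * L^(l-j) * (-(Complex.I*(y:ℂ)))^j
          = S1 l j * L^(l-j) * ((Complex.I*(y:ℂ))^j + (-(Complex.I*(y:ℂ)))^j) := by
      intro j _; ring
    rw [Finset.sum_congr rfl merge]
    rw [sum_even _ (fun j hj => by
      rw [Odd.neg_pow hj]
      ring) l]
    rw [hd', Finset.mul_sum]
    refine (Finset.sum_congr rfl fun m _ => ?_).symm
    rw [show (-(Complex.I*(y:ℂ)))^(2*m) = (Complex.I*(y:ℂ))^(2*m) from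
      Even.neg_pow (even_two_mul m) _, Iy_pow_even]
    ring
  -- Tr d = c'/2 , i.e. 2 * Tr d q = c' q
  have hTrd : ∀ q, 2 * Tr L S2 d q = c' q := by
    intro q
    rw [Tr, Finset.mul_sum]
    have : ∀ k ∈ Finset.range (q+1),
        2 * (S2 q k * L^(q-k) * d k)
          = S2 q k * L^(q-k) * dff L (Complex.I*(y:ℂ)) k
              + S2 q k * L^(q-k) * dff L (-(Complex.I*(y:ℂ))) k := by
      intro k _
      have := hdd k
      calc 2 * (S2 q k * L^(q-k) * d k) = S2 q k * L^(q-k) * (2 * d k) := by ring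
        _ = _ := by rw [this]; ring
    rw [Finset.sum_congr rfl this, Finset.sum_add_distrib,
      Tdff L S1 S2 hS1 hS2 _ q, Tdff L S1 S2 hS1 hS2 _ q]
  -- RHS of goal equals Tr (bconv d Ed) n
  have hRHS : ∑ k ∈ Finset.range (n+1), ∑ l ∈ Finset.range (k+1), ∑ m ∈ Finset.range (l/2+1),
        S2 n k * L^(n+l-k-2*m) * (k.choose l : ℂ) * Ed (k-l) * (-1)^m * (y:ℂ)^(2*m) *
          S1 l (2*m)
      = Tr L S2 (bconv d Ed) n := by
    rw [Tr]
    refine Finset.sum_congr rfl fun k hk => ?_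
    rw [Finset.mem_range] at hk
    rw [bconv, Finset.mul_sum]
    refine Finset.sum_congr rfl fun l hl => ?_
    rw [Finset.mem_range] at hl
    have hdl : (k.choose l : ℂ) * d l * Ed (k-l)
        = ∑ m ∈ Finset.range (l/2+1),
            (k.choose l : ℂ) * ((-1:ℂ)^m * (y:ℂ)^(2*m) * L^(l-2*m) * S1 l (2*m)) * Ed (k-l) := by
      simp only [hd']
      rw [Finset.mul_sum, Finset.sum_mul]
    rw [hdl, Finset.mul_sum]
    refine Finset.sum_congr rfl fun m hm => ?_
    rw [Finset.mem_range] at hm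
    have hpow : L^(n-k) * L^(l-2*m) = L^(n+l-k-2*m) := by
      rw [← pow_add]
      congr 1
      omega
    calc S2 n k * L^(n+l-k-2*m) * (k.choose l : ℂ) * Ed (k-l) * (-1)^m * (y:ℂ)^(2*m) * S1 l (2*m)
        = (L^(n-k) * L^(l-2*m)) * (S2 n k * ((k.choose l : ℂ)) * Ed (k-l) * ((-1)^m * (y:ℂ)^(2*m) * S1 l (2*m))) := by
          rw [hpow]; ring
      _ = S2 n k * L ^ (n - k) * ((k.choose l:ℂ) * ((-1:ℂ)^m * (y:ℂ)^(2*m) * L^(l-2*m) * S1 l (2*m)) * Ed (k-l)) := by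
          ring
  rw [hRHS, Tmul L S2 hS2 d Ed n]
  -- now LHS = bconv (Tr d) (Tr Ed) n
  rw [bconv]
  have final : ∀ j ∈ Finset.range (n+1),
      (n.choose j : ℂ) * Tr L S2 d j * Tr L S2 Ed (n-j)
        = (n.choose j : ℂ) * (c' j / 2) * E (n-j) := by
    intro j _
    rw [hTrEd]
    have := hTrd j
    have h2 : Tr L S2 d j = c' j / 2 := by
      field_simp
      linear_combination this
    rw [h2]
  rw [Finset.sum_congr rfl final]
  rw [sum_even (fun j => (n.choose j : ℂ) * (c' j / 2) * E (n-j)) (fun j hj => by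
    simp only [hc']
    rw [Odd.neg_pow hj]
    ring) n]
  refine Finset.sum_congr rfl fun m _ => ?_
  simp only [hc']
  rw [show (-(Complex.I*(y:ℂ)))^(2*m) = (Complex.I*(y:ℂ))^(2*m) from by
    rw [Even.neg_pow (even_two_mul m)]]
  rw [Iy_pow_even]
  ring
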